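/- There exists a constant C>0 such that for every smooth, rapidly decaying (Schwartz-class) divergence-free vector field u = (u₁,u₂,u₃) on ℝ³, one has the identity ∫_{ℝ³} ((u·∇)u)·Δ_h u dx = −∫_{ℝ³} Σ_{k,j=1}^{3} Σ_{i=1}^{2} ∂_j u_k ∂_i u_j ∂_i u_k dx, and consequently the bound |∫_{ℝ³} ((u·∇)u)·Δ_h u dx| ≤ C ∫_{ℝ³} |∇u| |∇_h u|² dx. -/

import Mathlib

/- Common definitions: 3D vector calculus, Leray-Hopf weak solutions,
   homogeneous Besov norms via Littlewood-Paley decomposition. -/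

noncomputable section

open MeasureTheory Real Set
open scoped ENNReal Topology RealInnerProductSpace

/-- Euclidean space ℝ³. -/
abbrev E3 := EuclideanSpace ℝ (Fin 3)

/-- The `i`-th standard basis vector of ℝ³. -/
def e3 (i : Fin 3) : E3 := EuclideanSpace.single i 1

/-- `i`-th partial derivative of a vector field. -/
def pd (i : Fin 3) (f : E3 → E3) (x : E3) : E3 := fderiv ℝ f x (e3 i)

/-- `i`-th partial derivative of a scalar field. -/
def pdS (i : Fin 3) (f : E3 → ℝ) (x : E3) : ℝ := fderiv ℝ f x (e3 i)

/-- `∂ᵢ fⱼ`. -/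
def pdC (i j : Fin 3) (f : E3 → E3) (x : E3) : ℝ := fderiv ℝ (fun y => f y j) x (e3 i)

/-- Divergence of a vector field on ℝ³. -/
def div3 (f : E3 → E3) (x : E3) : ℝ := ∑ i, pd i f x i

/-- Convective term `(a·∇)f`. -/
def advect (a f : E3 → E3) (x : E3) : E3 := ∑ i, a x i • pd i f x

/-- Laplacian of a vector field. -/
def lap3 (f : E3 → E3) (x : E3) : E3 := ∑ i, pd i (pd i f) x

/-- Horizontal Laplacian `Δₕ = ∂₁² + ∂₂²`. -/
def lapH (f : E3 → E3) (x : E3) : E3 := ∑ i ∈ ({0, 1} : Finset (Fin 3)), pd i (pd i f) x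

/-- Gradient of a scalar field, as a vector field. -/
def gradS (f : E3 → ℝ) (x : E3) : E3 := ∑ i, pdS i f x • e3 i

/-- Curl (vorticity) of a vector field on ℝ³. -/
def curl3 (f : E3 → E3) (x : E3) : E3 :=
  (pdC 1 2 f x - pdC 2 1 f x) • e3 0 + (pdC 2 0 f x - pdC 0 2 f x) • e3 1 +
    (pdC 0 1 f x - pdC 1 0 f x) • e3 2

/-- Squared Frobenius norm of the full gradient `|∇f|²`. -/
def gradNormSq (f : E3 → E3) (x : E3) : ℝ := ∑ i, ‖pd i f x‖ ^ 2

/-- Squared Frobenius norm of the horizontal gradient `|∇ₕf|²`. -/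
def gradHNormSq (f : E3 → E3) (x : E3) : ℝ := ∑ i ∈ ({0, 1} : Finset (Fin 3)), ‖pd i f x‖ ^ 2

/-- Squared Frobenius norm `|∇ₕ∇f|²` of all second derivatives `∂ᵢ∂ₖfⱼ`, `i ∈ {1,2}`. -/
def hGrad2Sq (f : E3 → E3) (x : E3) : ℝ :=
  ∑ i ∈ ({0, 1} : Finset (Fin 3)), ∑ k, ‖pd i (pd k f) x‖ ^ 2

/-- Squared L² norm of a vector field. -/
def l2sq (f : E3 → E3) : ℝ := ∫ x, ‖f x‖ ^ 2

/-- Squared L² norm of the gradient (enstrophy-type quantity). -/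
def enst (f : E3 → E3) : ℝ := ∫ x, gradNormSq f x

/-- Divergence-free smooth compactly supported vector fields (the test class 𝒱). -/
def TestVF : Set (E3 → E3) :=
  {f | ContDiff ℝ (⊤ : ℕ∞) f ∧ HasCompactSupport f ∧ ∀ x, div3 f x = 0}

/-- Membership in `H`: the closure of 𝒱 in the L² topology. -/
def MemH (f : E3 → E3) : Prop :=
  ∀ ε > (0 : ℝ), ∃ g ∈ TestVF, eLpNorm (fun x => f x - g x) 2 volume < ENNReal.ofReal ε

/-- H¹ distance between two vector fields. -/
def H1dist (f g : E3 → E3) : ℝ≥0∞ :=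
  eLpNorm (fun x => f x - g x) 2 volume +
    eLpNorm (fun x => fderiv ℝ f x - fderiv ℝ g x) 2 volume

/-- Membership in `V`: the closure of 𝒱 in the H¹ topology. -/
def MemV (f : E3 → E3) : Prop :=
  ∀ ε > (0 : ℝ), ∃ g ∈ TestVF, H1dist f g < ENNReal.ofReal ε

/-- Continuity in the `V` (H¹) topology on `[0,T)`. -/
def VContinuousOn (u : ℝ → E3 → E3) (T : ℝ) : Prop :=
  ∀ t ∈ Ico (0 : ℝ) T, ∀ ε > (0 : ℝ), ∃ δ > (0 : ℝ), ∀ t' ∈ Ico (0 : ℝ) T,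
    |t' - t| < δ → H1dist (u t') (u t) < ENNReal.ofReal ε

/-- H² norm of a vector field. -/
def H2norm (f : E3 → E3) : ℝ≥0∞ :=
  eLpNorm f 2 volume + eLpNorm (fun x => fderiv ℝ f x) 2 volume +
    eLpNorm (fun x => fderiv ℝ (fun y => fderiv ℝ f y) x) 2 volume

/-- `u` is regular on `(0,T)`: `u ∈ C([0,T); V) ∩ L²(0,T; H²(ℝ³))`. -/
def RegularOn (T : ℝ) (u : ℝ → E3 → E3) : Prop :=
  (∀ t ∈ Ico (0 : ℝ) T, MemV (u t)) ∧ VContinuousOn u T ∧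
    ∫⁻ t in Ioo (0 : ℝ) T, H2norm (u t) ^ (2 : ℕ) < ∞

/-- Space-time test functions: smooth, compactly supported in space,
divergence free. -/
def IsSpaceTimeTest (φ : ℝ → E3 → E3) : Prop :=
  ContDiff ℝ (⊤ : ℕ∞) (fun q : ℝ × E3 => φ q.1 q.2) ∧ (∀ t, HasCompactSupport (φ t)) ∧
    ∀ t x, div3 (φ t) x = 0

/-- Leray-Hopf weak solution of the 3D Navier-Stokes equations on `ℝ³ × (0,T)`
with viscosity `ν` and initial datum `u₀`. -/
structure LerayHopf (ν T : ℝ) (u₀ : E3 → E3) (u : ℝ → E3 → E3) : Prop where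
  /-- initial datum -/
  init : u 0 = u₀
  /-- `u(t) ∈ H` for all `t ∈ [0,T)` -/
  memH : ∀ t ∈ Ico (0 : ℝ) T, MemH (u t)
  /-- weak continuity into `H`: `u ∈ C_w([0,T); H)` -/
  weakContH : ∀ v : E3 → E3, MemLp v 2 volume →
    ContinuousOn (fun t => ∫ x, ⟪u t x, v x⟫) (Ico (0 : ℝ) T)
  /-- `u(t) ∈ V` for a.e. `t` -/
  aeMemV : ∀ᵐ t ∂(volume.restrict (Ioo (0 : ℝ) T)), MemV (u t)
  /-- `u ∈ L²(0,T; V)` -/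
  l2V : ∫⁻ t in Ioo (0 : ℝ) T, ENNReal.ofReal (l2sq (u t) + enst (u t)) < ∞
  /-- the equations hold in the sense of distributions -/
  weakEq : ∀ φ : ℝ → E3 → E3, IsSpaceTimeTest φ →
    ∀ᵐ t₀ ∂(volume.restrict (Ioo (0 : ℝ) T)), ∀ᵐ t ∂(volume.restrict (Ioo (0 : ℝ) T)),
      (∫ x, ⟪u t x, φ t x⟫) - ∫ x, ⟪u t₀ x, φ t₀ x⟫ =
        (∫ s in t₀..t, ∫ x, ⟪u s x, deriv (fun τ => φ τ x) s + ν • lap3 (φ s) x⟫) +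
          ∫ s in t₀..t, ∫ x, ⟪advect (u s) (φ s) x, u s x⟫
  /-- energy inequality from time `0` -/
  energy₀ : ∀ t ∈ Ico (0 : ℝ) T,
    l2sq (u t) + 2 * ν * ∫ s in (0 : ℝ)..t, enst (u s) ≤ l2sq u₀
  /-- energy inequality from a.e. `t₀` -/
  energy : ∀ᵐ t₀ ∂(volume.restrict (Ioo (0 : ℝ) T)), ∀ t ∈ Ico t₀ T,
    l2sq (u t) + 2 * ν * ∫ s in t₀..t, enst (u s) ≤ l2sq (u t₀)

/-- A strong (smooth) solution of the 3D Navier-Stokes equations on `ℝ³ × (0,T)`,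
lying in `C([0,T); V) ∩ L²_loc(0,T; H²)`. -/
structure NSStrongSol (ν T : ℝ) (u : ℝ → E3 → E3) (p : ℝ → E3 → ℝ) : Prop where
  smooth : ContDiffOn ℝ (⊤ : ℕ∞) (fun q : ℝ × E3 => u q.1 q.2) (Ioo (0 : ℝ) T ×ˢ univ)
  psmooth : ContDiffOn ℝ (⊤ : ℕ∞) (fun q : ℝ × E3 => p q.1 q.2) (Ioo (0 : ℝ) T ×ˢ univ)
  divfree : ∀ t ∈ Ioo (0 : ℝ) T, ∀ x, div3 (u t) x = 0
  eq : ∀ t ∈ Ioo (0 : ℝ) T, ∀ x,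
    deriv (fun τ => u τ x) t - ν • lap3 (u t) x + advect (u t) (u t) x + gradS (p t) x = 0
  memV : ∀ t ∈ Ico (0 : ℝ) T, MemV (u t)
  contV : VContinuousOn u T
  l2locH2 : ∀ a b : ℝ, 0 < a → a ≤ b → b < T →
    ∫⁻ t in Ioo a b, H2norm (u t) ^ (2 : ℕ) < ∞

/-! ### Littlewood-Paley decomposition and homogeneous Besov norms -/

/-- An admissible Littlewood-Paley family: a nonnegative radial Schwartz function `φ`
supported in the annulus `{3/4 ≤ |ξ| ≤ 8/3}` with `∑_{j∈ℤ} φ(2⁻ʲξ) = 1` for `ξ ≠ 0`. -/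
structure LPFamily where
  φ : E3 → ℝ
  schwartz : ∃ Φ : SchwartzMap E3 ℝ, ∀ x, Φ x = φ x
  radial : ∀ x y : E3, ‖x‖ = ‖y‖ → φ x = φ y
  nonneg : ∀ x, 0 ≤ φ x
  supp : ∀ x, φ x ≠ 0 → 3 / 4 ≤ ‖x‖ ∧ ‖x‖ ≤ 8 / 3
  partition : ∀ x : E3, x ≠ 0 → HasSum (fun j : ℤ => φ ((2 : ℝ) ^ (-j) • x)) 1

/-- The kernel `h = ℱ⁻¹φ` (real-valued since `φ` is real and even). -/
def LPFamily.h (D : LPFamily) (x : E3) : ℝ :=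
  (VectorFourier.fourierIntegral Real.fourierChar volume (innerₗ E3) (fun ξ => (D.φ ξ : ℂ)) (-x)).re

variable {F : Type*} [NormedAddCommGroup F] [NormedSpace ℝ F] [CompleteSpace F]

/-- The homogeneous dyadic block `Δ̇ⱼ f (x) = 2^{3j} ∫ h(2ʲy) f(x-y) dy`. -/
def lpBlock (D : LPFamily) (j : ℤ) (f : E3 → F) (x : E3) : F :=
  ((2 : ℝ) ^ (3 * j)) • ∫ y : E3, D.h ((2 : ℝ) ^ j • y) • f (x - y)

/-- The homogeneous Besov norm `‖f‖_{Ḃ^s_{p,r}}`. -/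
def besovNorm (D : LPFamily) (s : ℝ) (p r : ℝ≥0∞) (f : E3 → F) : ℝ≥0∞ :=
  if r = ∞ then
    ⨆ j : ℤ, ENNReal.ofReal ((2 : ℝ) ^ (s * (j : ℝ))) * eLpNorm (lpBlock D j f) p volume
  else
    (∑' j : ℤ, (ENNReal.ofReal ((2 : ℝ) ^ (s * (j : ℝ))) *
      eLpNorm (lpBlock D j f) p volume) ^ r.toReal) ^ (1 / r.toReal)

/-- The `Ḃ^s_{∞,∞}` norm of the distributional partial derivative `∂ᵢf`, computed
on Littlewood-Paley blocks (where `∂ᵢ Δ̇ⱼ f = Δ̇ⱼ ∂ᵢ f`). -/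
def pdBesov (D : LPFamily) (s : ℝ) (i : Fin 3) (f : E3 → F) : ℝ≥0∞ :=
  ⨆ j : ℤ, ENNReal.ofReal ((2 : ℝ) ^ (s * (j : ℝ))) *
    eLpNorm (fun x => fderiv ℝ (lpBlock D j f) x (e3 i)) ∞ volume

/-- The `Ḃ^s_{∞,∞}` norm of the full gradient `∇f`: the maximum of the norms of
`∂₁f, ∂₂f, ∂₃f`. -/
def gradBesov (D : LPFamily) (s : ℝ) (f : E3 → F) : ℝ≥0∞ :=
  ⨆ i : Fin 3, pdBesov D s i f


-- auxiliary lemmas (to be appended after base minus theorem)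
section Aux

open SchwartzMap

lemma schwartz_hasTemperateGrowth {E F : Type*} [NormedAddCommGroup E] [NormedSpace ℝ E]
    [NormedAddCommGroup F] [NormedSpace ℝ F] (f : 𝓢(E, F)) :
    Function.HasTemperateGrowth ⇑f := by
  refine ⟨f.smooth', fun n => ⟨0, SchwartzMap.seminorm ℝ 0 n f, fun x => ?_⟩⟩
  simpa using norm_iteratedFDeriv_le_seminorm ℝ f n x

/-- coordinate of a Schwartz vector field, as a Schwartz function -/
def cS (U : 𝓢(E3, E3)) (k : Fin 3) : 𝓢(E3, ℝ) :=
  SchwartzMap.bilinLeftCLM ((ContinuousLinearMap.mul ℝ ℝ).comp (EuclideanSpace.proj k))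
    (Function.HasTemperateGrowth.const (1 : ℝ)) U

@[simp] lemma cS_apply (U : 𝓢(E3, E3)) (k : Fin 3) (x : E3) : cS U k x = U x k := by
  simp [cS, SchwartzMap.bilinLeftCLM]
  rfl

/-- product of two Schwartz functions -/
def mulS (f g : 𝓢(E3, ℝ)) : 𝓢(E3, ℝ) :=
  SchwartzMap.bilinLeftCLM (ContinuousLinearMap.mul ℝ ℝ) (schwartz_hasTemperateGrowth g) f

@[simp] lemma mulS_apply (f g : 𝓢(E3, ℝ)) (x : E3) : mulS f g x = f x * g x := rfl

def P3 (i : Fin 3) : 𝓢(E3, ℝ) →L[ℝ] 𝓢(E3, ℝ) := LineDeriv.lineDerivOpCLM ℝ _ (e3 i)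

@[simp] lemma P3_apply (i : Fin 3) (f : 𝓢(E3, ℝ)) (x : E3) :
    P3 i f x = fderiv ℝ f x (e3 i) := rfl

def PV (i : Fin 3) : 𝓢(E3, E3) →L[ℝ] 𝓢(E3, E3) := LineDeriv.lineDerivOpCLM ℝ _ (e3 i)

@[simp] lemma PV_apply (i : Fin 3) (f : 𝓢(E3, E3)) (x : E3) :
    PV i f x = fderiv ℝ f x (e3 i) := rfl

lemma int3 (a b c : 𝓢(E3, ℝ)) : Integrable (fun x => a x * b x * c x) volume := by
  have h := (mulS (mulS a b) c).integrable (μ := volume)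
  exact h

lemma int2 (a b : 𝓢(E3, ℝ)) : Integrable (fun x => a x * b x) volume := by
  have h := (mulS a b).integrable (μ := volume)
  exact h

/-- integration by parts for Schwartz functions -/
lemma ibp (f g : 𝓢(E3, ℝ)) (v : E3) :
    ∫ x, f x * fderiv ℝ g x v = -∫ x, fderiv ℝ f x v * g x := by
  apply integral_mul_fderiv_eq_neg_fderiv_mul_of_integrable
  · have h := int2 (LineDeriv.lineDerivOpCLM ℝ 𝓢(E3, ℝ) v f) g
    simpa [SchwartzMap.lineDerivOp_apply_eq_fderiv] using h
  · have h := int2 f (LineDeriv.lineDerivOpCLM ℝ 𝓢(E3, ℝ) v g)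
    simpa [SchwartzMap.lineDerivOp_apply_eq_fderiv] using h
  · exact int2 f g
  · exact fun x _ => f.differentiable x
  · exact fun x _ => g.differentiable x

/-- component of vector derivative -/
lemma comp_swap {f : E3 → E3} {x : E3} (hf : DifferentiableAt ℝ f x) (v : E3) (k : Fin 3) :
    fderiv ℝ f x v k = fderiv ℝ (fun y => f y k) x v := by
  have h : fderiv ℝ (⇑(EuclideanSpace.proj (𝕜 := ℝ) k) ∘ f) x =
      (EuclideanSpace.proj (𝕜 := ℝ) k).comp (fderiv ℝ f x) :=
    ((EuclideanSpace.proj (𝕜 := ℝ) k).hasFDerivAt.comp x hf.hasFDerivAt).fderiv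
  have h2 : fderiv ℝ (fun y => f y k) x v =
      ((EuclideanSpace.proj (𝕜 := ℝ) k).comp (fderiv ℝ f x)) v := by
    rw [← h]; rfl
  rw [h2]; rfl

/-- symmetry of second derivatives for Schwartz functions -/
lemma symm2 (c : 𝓢(E3, ℝ)) (v w x : E3) :
    fderiv ℝ (fun y => fderiv ℝ c y v) x w = fderiv ℝ (fun y => fderiv ℝ c y w) x v := by
  have hg : Differentiable ℝ (fderiv ℝ c) := by
    have := c.smooth'
    rw [contDiff_infty_iff_fderiv] at this
    exact this.2.differentiable (by simp)
  have key : ∀ m : E3, fderiv ℝ (fun y => fderiv ℝ c y m) x =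
      (fderiv ℝ (fderiv ℝ c) x).flip m := by
    intro m
    have h : fderiv ℝ (⇑(ContinuousLinearMap.apply ℝ ℝ m) ∘ (fderiv ℝ c)) x =
        (ContinuousLinearMap.apply ℝ ℝ m).comp (fderiv ℝ (fderiv ℝ c) x) :=
      ((ContinuousLinearMap.apply ℝ ℝ m).hasFDerivAt.comp x (hg x).hasFDerivAt).fderiv
    have h2 : fderiv ℝ (fun y => fderiv ℝ c y m) x =
        (ContinuousLinearMap.apply ℝ ℝ m).comp (fderiv ℝ (fderiv ℝ c) x) := by
      rw [← h]; rfl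
    rw [h2]
    ext z
    rfl
  rw [key v, key w]
  have hsymm := second_derivative_symmetric (f := ⇑c) (f' := fderiv ℝ c)
    (f'' := fderiv ℝ (fderiv ℝ c) x) (fun y => (c.differentiable y).hasFDerivAt)
    ((hg x).hasFDerivAt)
  simp only [ContinuousLinearMap.flip_apply]
  exact hsymm w v

variable (U : 𝓢(E3, E3))

lemma pd_eq_PV (i : Fin 3) : pd i ⇑U = ⇑(PV i U) := by
  funext x; rfl

lemma pd_comp (i k : Fin 3) (x : E3) : pd i (⇑U) x k = P3 i (cS U k) x := by
  rw [pd, comp_swap (U.differentiable x) (e3 i) k]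
  have h : (fun y => (⇑U) y k) = ⇑(cS U k) := by funext y; simp
  rw [h]; rfl

lemma fun_pd_comp (i k : Fin 3) : (fun y => pd i (⇑U) y k) = ⇑(P3 i (cS U k)) := by
  funext y; exact pd_comp U i k y

lemma pdC_eq (i k : Fin 3) (x : E3) : pdC i k (⇑U) x = P3 i (cS U k) x := by
  rw [pdC]
  have h : (fun y => (⇑U) y k) = ⇑(cS U k) := by funext y; simp
  rw [h]; rfl

lemma pd2_comp (i k : Fin 3) (x : E3) :
    pd i (pd i (⇑U)) x k = P3 i (P3 i (cS U k)) x := by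
  rw [pd, pd_eq_PV U i, comp_swap ((PV i U).differentiable x) (e3 i) k]
  have h : (fun y => PV i U y k) = ⇑(P3 i (cS U k)) := by
    funext y
    have := pd_comp U i k y
    rw [← this, pd_eq_PV U i]
  rw [h]; rfl

lemma advect_comp (x : E3) (k : Fin 3) :
    advect (⇑U) (⇑U) x k = ∑ j, U x j * P3 j (cS U k) x := by
  have h0 : advect (⇑U) (⇑U) x k
      = EuclideanSpace.proj (𝕜 := ℝ) k (advect (⇑U) (⇑U) x) := rfl
  rw [h0, advect, map_sum]
  refine Finset.sum_congr rfl fun j _ => ?_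
  have h1 : EuclideanSpace.proj (𝕜 := ℝ) k ((⇑U) x j • pd j (⇑U) x)
      = U x j * (pd j (⇑U) x k) := by
    simp
  rw [h1, pd_comp U j k x]

lemma lapH_comp (x : E3) (k : Fin 3) :
    lapH (⇑U) x k = ∑ i ∈ ({0, 1} : Finset (Fin 3)), P3 i (P3 i (cS U k)) x := by
  have h0 : lapH (⇑U) x k = EuclideanSpace.proj (𝕜 := ℝ) k (lapH (⇑U) x) := rfl
  rw [h0, lapH, map_sum]
  exact Finset.sum_congr rfl fun i _ => pd2_comp U i k x

lemma inner_expand (x : E3) :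
    ⟪advect (⇑U) (⇑U) x, lapH (⇑U) x⟫ =
      ∑ k : Fin 3, ∑ j : Fin 3, ∑ i ∈ ({0, 1} : Finset (Fin 3)),
        (U x j * P3 j (cS U k) x) * P3 i (P3 i (cS U k)) x := by
  rw [PiLp.inner_apply]
  refine Finset.sum_congr rfl fun k _ => ?_
  rw [advect_comp U x k, lapH_comp U x k]
  simp only [RCLike.inner_apply, conj_trivial]
  rw [mul_comm]
  rw [Finset.sum_mul]
  exact Finset.sum_congr rfl fun j _ => by rw [Finset.mul_sum]

end Aux
section Aux2
open SchwartzMap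
variable (U : 𝓢(E3, E3))

lemma P3_symm (c : 𝓢(E3, ℝ)) (i j : Fin 3) (x : E3) :
    P3 i (P3 j c) x = P3 j (P3 i c) x := by
  have h1 : ⇑(P3 j c) = fun y => fderiv ℝ (⇑c) y (e3 j) := rfl
  have h2 : ⇑(P3 i c) = fun y => fderiv ℝ (⇑c) y (e3 i) := rfl
  have g1 : P3 i (P3 j c) x = fderiv ℝ (fun y => fderiv ℝ (⇑c) y (e3 j)) x (e3 i) := by
    rw [P3_apply, h1]
  have g2 : P3 j (P3 i c) x = fderiv ℝ (fun y => fderiv ℝ (⇑c) y (e3 i)) x (e3 j) := by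
    rw [P3_apply, h2]
  rw [g1, g2, symm2]

lemma div_sum (x : E3) : ∑ j : Fin 3, P3 j (cS U j) x = div3 (⇑U) x := by
  rw [div3]
  exact Finset.sum_congr rfl fun j _ => (pd_comp U j j x).symm

lemma divfree_cancel (hU : ∀ x, div3 (⇑U) x = 0) (w : 𝓢(E3, ℝ)) :
    ∑ j : Fin 3, ∫ x, U x j * fderiv ℝ (⇑w) x (e3 j) * w x = 0 := by
  have step : ∀ j : Fin 3, ∫ x, U x j * fderiv ℝ (⇑w) x (e3 j) * w x
      = (1 / 2 : ℝ) * -∫ x, fderiv ℝ (⇑(cS U j)) x (e3 j) * (mulS w w) x := by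
    intro j
    have e1 : (fun x => U x j * fderiv ℝ (⇑w) x (e3 j) * w x)
        = fun x => (1 / 2 : ℝ) * (cS U j x * fderiv ℝ (⇑(mulS w w)) x (e3 j)) := by
      funext x
      have hm : ⇑(mulS w w) = fun y => w y * w y := rfl
      rw [hm, fderiv_fun_mul (w.differentiable x) (w.differentiable x)]
      simp only [ContinuousLinearMap.add_apply, ContinuousLinearMap.coe_smul',
        Pi.smul_apply, smul_eq_mul, cS_apply]
      ring
    rw [e1, MeasureTheory.integral_const_mul, ibp (cS U j) (mulS w w) (e3 j)]
  rw [Finset.sum_congr rfl fun j _ => step j]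
  rw [← Finset.mul_sum]
  have : ∑ j : Fin 3, -∫ x, fderiv ℝ (⇑(cS U j)) x (e3 j) * (mulS w w) x
      = -∑ j : Fin 3, ∫ x, P3 j (cS U j) x * (mulS w w) x := by
    rw [← Finset.sum_neg_distrib]
    simp only [P3_apply]
  rw [this, ← MeasureTheory.integral_finset_sum _ (fun j _ => int2 (P3 j (cS U j)) (mulS w w))]
  have hz : (fun x => ∑ j : Fin 3, P3 j (cS U j) x * (mulS w w) x) = fun _ => (0 : ℝ) := by
    funext x
    rw [← Finset.sum_mul, div_sum U x, hU x, zero_mul]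
  rw [hz]
  simp

lemma term_eq (k j i : Fin 3) :
    ∫ x, (U x j * P3 j (cS U k) x) * P3 i (P3 i (cS U k)) x
      = -(∫ x, U x j * fderiv ℝ (⇑(P3 i (cS U k))) x (e3 j) * P3 i (cS U k) x)
        - ∫ x, P3 j (cS U k) x * P3 i (cS U j) x * P3 i (cS U k) x := by
  set c := cS U k with hc
  have h1 : (fun x => (U x j * P3 j c x) * P3 i (P3 i c) x)
      = fun x => (mulS (cS U j) (P3 j c)) x * fderiv ℝ (⇑(P3 i c)) x (e3 i) := by
    funext x
    simp only [mulS_apply, cS_apply, P3_apply]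
  rw [h1, ibp (mulS (cS U j) (P3 j c)) (P3 i c) (e3 i)]
  have h2 : ∀ x, fderiv ℝ (⇑(mulS (cS U j) (P3 j c))) x (e3 i)
      = U x j * P3 i (P3 j c) x + P3 j c x * P3 i (cS U j) x := by
    intro x
    have hm : ⇑(mulS (cS U j) (P3 j c)) = fun y => cS U j y * P3 j c y := rfl
    rw [hm, fderiv_fun_mul ((cS U j).differentiable x) ((P3 j c).differentiable x)]
    simp only [ContinuousLinearMap.add_apply, ContinuousLinearMap.coe_smul',
      Pi.smul_apply, smul_eq_mul, cS_apply, P3_apply]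
  have h3 : (fun x => fderiv ℝ (⇑(mulS (cS U j) (P3 j c))) x (e3 i) * P3 i c x)
      = fun x => U x j * fderiv ℝ (⇑(P3 i c)) x (e3 j) * P3 i c x
          + P3 j c x * P3 i (cS U j) x * P3 i c x := by
    funext x
    rw [h2 x, P3_symm c i j x]
    have : P3 j (P3 i c) x = fderiv ℝ (⇑(P3 i c)) x (e3 j) := rfl
    rw [this]
    ring
  have ha : Integrable (fun x => U x j * fderiv ℝ (⇑(P3 i c)) x (e3 j) * P3 i c x) volume := by
    have h := int3 (cS U j) (LineDeriv.lineDerivOpCLM ℝ 𝓢(E3, ℝ) (e3 j) (P3 i c)) (P3 i c)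
    simpa [SchwartzMap.lineDerivOp_apply_eq_fderiv] using h
  have hb : Integrable (fun x => P3 j c x * P3 i (cS U j) x * P3 i c x) volume := by
    have h := int3 (P3 j c) (P3 i (cS U j)) (P3 i c)
    simpa using h
  rw [h3, MeasureTheory.integral_add ha hb]
  ring

end Aux2
section Aux3
open SchwartzMap
variable (U : 𝓢(E3, E3))

lemma key_identity (hU : ∀ x, div3 (⇑U) x = 0) :
    (∫ x, ⟪advect (⇑U) (⇑U) x, lapH (⇑U) x⟫) =
      -∫ x, ∑ k : Fin 3, ∑ j : Fin 3, ∑ i ∈ ({0, 1} : Finset (Fin 3)),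
        pdC j k (⇑U) x * pdC i j (⇑U) x * pdC i k (⇑U) x := by
  have hint : ∀ k j i : Fin 3, Integrable
      (fun x => (U x j * P3 j (cS U k) x) * P3 i (P3 i (cS U k)) x) volume := by
    intro k j i
    have h := int3 (cS U j) (P3 j (cS U k)) (P3 i (P3 i (cS U k)))
    simpa using h
  have hintB : ∀ k j i : Fin 3, Integrable
      (fun x => P3 j (cS U k) x * P3 i (cS U j) x * P3 i (cS U k) x) volume :=
    fun k j i => int3 _ _ _
  have e0 : (fun x => (⟪advect (⇑U) (⇑U) x, lapH (⇑U) x⟫ : ℝ))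
      = fun x => ∑ k : Fin 3, ∑ j : Fin 3, ∑ i ∈ ({0, 1} : Finset (Fin 3)),
          (U x j * P3 j (cS U k) x) * P3 i (P3 i (cS U k)) x :=
    funext fun x => inner_expand U x
  rw [e0]
  rw [MeasureTheory.integral_finset_sum _ (fun k _ =>
        MeasureTheory.integrable_finset_sum _ (fun j _ =>
          MeasureTheory.integrable_finset_sum _ (fun i _ => hint k j i)))]
  have e1 : ∀ k : Fin 3, (∫ x, ∑ j : Fin 3, ∑ i ∈ ({0, 1} : Finset (Fin 3)),
        (U x j * P3 j (cS U k) x) * P3 i (P3 i (cS U k)) x)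
      = ∑ j : Fin 3, ∑ i ∈ ({0, 1} : Finset (Fin 3)),
          ∫ x, (U x j * P3 j (cS U k) x) * P3 i (P3 i (cS U k)) x := by
    intro k
    rw [MeasureTheory.integral_finset_sum _ (fun j _ =>
      MeasureTheory.integrable_finset_sum _ (fun i _ => hint k j i))]
    exact Finset.sum_congr rfl fun j _ =>
      MeasureTheory.integral_finset_sum _ (fun i _ => hint k j i)
  rw [Finset.sum_congr rfl fun k _ => e1 k]
  rw [Finset.sum_congr rfl fun k _ => Finset.sum_congr rfl fun j _ =>
    Finset.sum_congr rfl fun i _ => term_eq U k j i]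
  -- RHS manipulation
  have ep : (fun x => ∑ k : Fin 3, ∑ j : Fin 3, ∑ i ∈ ({0, 1} : Finset (Fin 3)),
        pdC j k (⇑U) x * pdC i j (⇑U) x * pdC i k (⇑U) x)
      = fun x => ∑ k : Fin 3, ∑ j : Fin 3, ∑ i ∈ ({0, 1} : Finset (Fin 3)),
          P3 j (cS U k) x * P3 i (cS U j) x * P3 i (cS U k) x := by
    funext x
    exact Finset.sum_congr rfl fun k _ => Finset.sum_congr rfl fun j _ =>
      Finset.sum_congr rfl fun i _ => by rw [pdC_eq, pdC_eq, pdC_eq]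
  rw [ep]
  rw [MeasureTheory.integral_finset_sum _ (fun k _ =>
        MeasureTheory.integrable_finset_sum _ (fun j _ =>
          MeasureTheory.integrable_finset_sum _ (fun i _ => hintB k j i)))]
  rw [Finset.sum_congr rfl fun k (_ : k ∈ Finset.univ) =>
    MeasureTheory.integral_finset_sum _ (fun j _ =>
      MeasureTheory.integrable_finset_sum _ (fun i _ => hintB k j i))]
  rw [Finset.sum_congr rfl fun k (_ : k ∈ Finset.univ) =>
    Finset.sum_congr rfl fun j (_ : j ∈ Finset.univ) =>
      MeasureTheory.integral_finset_sum _ (fun i _ => hintB k j i)]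
  -- now pure finite-sum algebra
  have hAz : ∀ k i : Fin 3, ∑ j : Fin 3,
      (∫ x, U x j * fderiv ℝ (⇑(P3 i (cS U k))) x (e3 j) * P3 i (cS U k) x) = 0 :=
    fun k i => divfree_cancel U hU (P3 i (cS U k))
  simp only [sub_eq_add_neg, Finset.sum_add_distrib]
  have hA0 : (∑ k : Fin 3, ∑ j : Fin 3, ∑ i ∈ ({0, 1} : Finset (Fin 3)),
      -(∫ x, U x j * fderiv ℝ (⇑(P3 i (cS U k))) x (e3 j) * P3 i (cS U k) x)) = 0 := by
    refine Finset.sum_eq_zero fun k _ => ?_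
    rw [Finset.sum_comm]
    refine Finset.sum_eq_zero fun i _ => ?_
    rw [Finset.sum_neg_distrib, hAz k i, neg_zero]
  rw [hA0, zero_add]
  simp only [Finset.sum_neg_distrib]
end Aux3
section Aux4
open SchwartzMap
variable (U : 𝓢(E3, E3))

lemma coord_abs_le (v : E3) (k : Fin 3) : |v k| ≤ ‖v‖ := by
  rw [EuclideanSpace.norm_eq]
  have h1 : |v k| = Real.sqrt (‖v k‖ ^ 2) := by
    rw [Real.sqrt_sq_eq_abs]
    simp [Real.norm_eq_abs, abs_abs]
  rw [h1]
  apply Real.sqrt_le_sqrt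
  exact Finset.single_le_sum (fun i _ => sq_nonneg ‖v i‖) (Finset.mem_univ k)

lemma pd_norm_le (x : E3) (j : Fin 3) :
    ‖pd j (⇑U) x‖ ≤ Real.sqrt (gradNormSq (⇑U) x) := by
  have h : ‖pd j (⇑U) x‖ = Real.sqrt (‖pd j (⇑U) x‖ ^ 2) :=
    (Real.sqrt_sq (norm_nonneg _)).symm
  rw [h, gradNormSq]
  apply Real.sqrt_le_sqrt
  exact Finset.single_le_sum (f := fun i => ‖pd i (⇑U) x‖ ^ 2)
    (fun i _ => sq_nonneg ‖pd i (⇑U) x‖) (Finset.mem_univ j)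

lemma pdH_sq_le (x : E3) {i : Fin 3} (hi : i ∈ ({0, 1} : Finset (Fin 3))) :
    ‖pd i (⇑U) x‖ ^ 2 ≤ gradHNormSq (⇑U) x := by
  rw [gradHNormSq]
  exact Finset.single_le_sum (f := fun l => ‖pd l (⇑U) x‖ ^ 2)
    (fun l _ => sq_nonneg ‖pd l (⇑U) x‖) hi

lemma pdC_abs_le (x : E3) (i k : Fin 3) : |pdC i k (⇑U) x| ≤ ‖pd i (⇑U) x‖ := by
  have h : pdC i k (⇑U) x = pd i (⇑U) x k := by
    rw [pdC_eq U i k x, ← pd_comp U i k x]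
  rw [h]
  exact coord_abs_le _ k

lemma gradH_nonneg (x : E3) : 0 ≤ gradHNormSq (⇑U) x :=
  Finset.sum_nonneg fun i _ => sq_nonneg _

lemma S_bound (x : E3) :
    |∑ k : Fin 3, ∑ j : Fin 3, ∑ i ∈ ({0, 1} : Finset (Fin 3)),
        pdC j k (⇑U) x * pdC i j (⇑U) x * pdC i k (⇑U) x|
      ≤ 18 * (Real.sqrt (gradNormSq (⇑U) x) * gradHNormSq (⇑U) x) := by
  have hterm : ∀ (k j : Fin 3), ∀ i ∈ ({0, 1} : Finset (Fin 3)),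
      |pdC j k (⇑U) x * pdC i j (⇑U) x * pdC i k (⇑U) x|
        ≤ Real.sqrt (gradNormSq (⇑U) x) * gradHNormSq (⇑U) x := by
    intro k j i hi
    rw [abs_mul, abs_mul]
    have h1 : |pdC j k (⇑U) x| ≤ Real.sqrt (gradNormSq (⇑U) x) :=
      (pdC_abs_le U x j k).trans (pd_norm_le U x j)
    have h2 : |pdC i j (⇑U) x| * |pdC i k (⇑U) x| ≤ gradHNormSq (⇑U) x := by
      have := mul_le_mul (pdC_abs_le U x i j) (pdC_abs_le U x i k)
        (abs_nonneg _) (norm_nonneg _)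
      calc |pdC i j (⇑U) x| * |pdC i k (⇑U) x| ≤ ‖pd i (⇑U) x‖ * ‖pd i (⇑U) x‖ := this
        _ = ‖pd i (⇑U) x‖ ^ 2 := (sq ‖pd i (⇑U) x‖).symm
        _ ≤ gradHNormSq (⇑U) x := pdH_sq_le U x hi
    calc |pdC j k (⇑U) x| * |pdC i j (⇑U) x| * |pdC i k (⇑U) x|
        = |pdC j k (⇑U) x| * (|pdC i j (⇑U) x| * |pdC i k (⇑U) x|) := by ring
      _ ≤ Real.sqrt (gradNormSq (⇑U) x) * gradHNormSq (⇑U) x :=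
          mul_le_mul h1 h2 (by positivity) (Real.sqrt_nonneg _)
  calc |∑ k : Fin 3, ∑ j : Fin 3, ∑ i ∈ ({0, 1} : Finset (Fin 3)),
        pdC j k (⇑U) x * pdC i j (⇑U) x * pdC i k (⇑U) x|
      ≤ ∑ k : Fin 3, ∑ j : Fin 3, ∑ i ∈ ({0, 1} : Finset (Fin 3)),
          |pdC j k (⇑U) x * pdC i j (⇑U) x * pdC i k (⇑U) x| := by
        refine (Finset.abs_sum_le_sum_abs _ _).trans ?_
        refine Finset.sum_le_sum fun k _ => ?_
        refine (Finset.abs_sum_le_sum_abs _ _).trans ?_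
        exact Finset.sum_le_sum fun j _ => Finset.abs_sum_le_sum_abs _ _
    _ ≤ ∑ k : Fin 3, ∑ j : Fin 3, ∑ i ∈ ({0, 1} : Finset (Fin 3)),
          Real.sqrt (gradNormSq (⇑U) x) * gradHNormSq (⇑U) x := by
        refine Finset.sum_le_sum fun k _ => Finset.sum_le_sum fun j _ =>
          Finset.sum_le_sum fun i hi => hterm k j i hi
    _ = 18 * (Real.sqrt (gradNormSq (⇑U) x) * gradHNormSq (⇑U) x) := by
        rw [Finset.sum_const, Finset.sum_const, Finset.sum_const]
        norm_num
        ring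

lemma S_integrable : Integrable (fun x => ∑ k : Fin 3, ∑ j : Fin 3,
    ∑ i ∈ ({0, 1} : Finset (Fin 3)),
      pdC j k (⇑U) x * pdC i j (⇑U) x * pdC i k (⇑U) x) volume := by
  have ep : (fun x => ∑ k : Fin 3, ∑ j : Fin 3, ∑ i ∈ ({0, 1} : Finset (Fin 3)),
        pdC j k (⇑U) x * pdC i j (⇑U) x * pdC i k (⇑U) x)
      = fun x => ∑ k : Fin 3, ∑ j : Fin 3, ∑ i ∈ ({0, 1} : Finset (Fin 3)),
          P3 j (cS U k) x * P3 i (cS U j) x * P3 i (cS U k) x := by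
    funext x
    exact Finset.sum_congr rfl fun k _ => Finset.sum_congr rfl fun j _ =>
      Finset.sum_congr rfl fun i _ => by rw [pdC_eq, pdC_eq, pdC_eq]
  rw [ep]
  exact MeasureTheory.integrable_finset_sum _ (fun k _ =>
    MeasureTheory.integrable_finset_sum _ (fun j _ =>
      MeasureTheory.integrable_finset_sum _ (fun i _ => int3 _ _ _)))

lemma rhs_integrable : Integrable
    (fun x => Real.sqrt (gradNormSq (⇑U) x) * gradHNormSq (⇑U) x) volume := by
  have hpd : ∀ i : Fin 3, pd i (⇑U) = ⇑(PV i U) := fun i => pd_eq_PV U i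
  have hterm : ∀ i l : Fin 3, Integrable (fun x => ‖PV i U x‖ * ‖PV l U x‖ ^ 2) volume := by
    intro i l
    set si := SchwartzMap.seminorm ℝ 0 0 (PV i U) with hsi
    set sl := SchwartzMap.seminorm ℝ 0 0 (PV l U) with hsl
    have hbi : ∀ x, ‖PV i U x‖ ≤ si := by
      intro x
      have := SchwartzMap.norm_pow_mul_le_seminorm ℝ (PV i U) 0 x
      simpa using this
    have hbl : ∀ x, ‖PV l U x‖ ≤ sl := by
      intro x
      have := SchwartzMap.norm_pow_mul_le_seminorm ℝ (PV l U) 0 x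
      simpa using this
    refine Integrable.mono' ((((PV l U).integrable (μ := volume)).norm).const_mul (si * sl))
      ?_ ?_
    · exact ((PV i U).continuous.norm.mul
        ((PV l U).continuous.norm.pow 2)).aestronglyMeasurable
    · refine Filter.Eventually.of_forall fun x => ?_
      have h0 : 0 ≤ ‖PV i U x‖ * ‖PV l U x‖ ^ 2 := by positivity
      rw [Real.norm_eq_abs, abs_of_nonneg h0]
      calc ‖PV i U x‖ * ‖PV l U x‖ ^ 2 = ‖PV i U x‖ * ‖PV l U x‖ * ‖PV l U x‖ := by ring
        _ ≤ si * sl * ‖PV l U x‖ := by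
            refine mul_le_mul (mul_le_mul (hbi x) (hbl x) (norm_nonneg _) ?_) le_rfl
              (norm_nonneg _) ?_
            · exact (norm_nonneg _).trans (hbi x)
            · positivity
  have h0int : Integrable (fun x => ∑ i : Fin 3, ∑ l ∈ ({0, 1} : Finset (Fin 3)),
      ‖PV i U x‖ * ‖PV l U x‖ ^ 2) volume :=
    MeasureTheory.integrable_finset_sum _ (fun i _ =>
      MeasureTheory.integrable_finset_sum _ (fun l _ => hterm i l))
  refine Integrable.mono' h0int ?_ ?_
  · have hG : Continuous (fun x => gradNormSq (⇑U) x) := by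
      have : (fun x => gradNormSq (⇑U) x) = fun x => ∑ i : Fin 3, ‖PV i U x‖ ^ 2 := rfl
      rw [this]
      exact continuous_finset_sum _ fun i _ => (PV i U).continuous.norm.pow 2
    have hH : Continuous (fun x => gradHNormSq (⇑U) x) := by
      have : (fun x => gradHNormSq (⇑U) x)
          = fun x => ∑ i ∈ ({0, 1} : Finset (Fin 3)), ‖PV i U x‖ ^ 2 := rfl
      rw [this]
      exact continuous_finset_sum _ fun i _ => (PV i U).continuous.norm.pow 2
    exact ((Real.continuous_sqrt.comp hG).mul hH).aestronglyMeasurable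
  · refine Filter.Eventually.of_forall fun x => ?_
    have hGnn : 0 ≤ gradNormSq (⇑U) x := Finset.sum_nonneg fun i _ => sq_nonneg _
    have h0 : 0 ≤ Real.sqrt (gradNormSq (⇑U) x) * gradHNormSq (⇑U) x := by
      have := gradH_nonneg U x
      positivity
    rw [Real.norm_eq_abs, abs_of_nonneg h0]
    have hsqrt : Real.sqrt (gradNormSq (⇑U) x) ≤ ∑ i : Fin 3, ‖pd i (⇑U) x‖ := by
      have h1 : gradNormSq (⇑U) x ≤ (∑ i : Fin 3, ‖pd i (⇑U) x‖) ^ 2 := by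
        rw [gradNormSq]
        exact Finset.sum_sq_le_sq_sum_of_nonneg fun i _ => norm_nonneg _
      calc Real.sqrt (gradNormSq (⇑U) x) ≤ Real.sqrt ((∑ i : Fin 3, ‖pd i (⇑U) x‖) ^ 2) :=
            Real.sqrt_le_sqrt h1
        _ = ∑ i : Fin 3, ‖pd i (⇑U) x‖ :=
            Real.sqrt_sq (Finset.sum_nonneg fun i _ => norm_nonneg _)
    calc Real.sqrt (gradNormSq (⇑U) x) * gradHNormSq (⇑U) x
        ≤ (∑ i : Fin 3, ‖pd i (⇑U) x‖) * gradHNormSq (⇑U) x :=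
          mul_le_mul_of_nonneg_right hsqrt (gradH_nonneg U x)
      _ = ∑ i : Fin 3, ∑ l ∈ ({0, 1} : Finset (Fin 3)), ‖PV i U x‖ * ‖PV l U x‖ ^ 2 := by
          rw [Finset.sum_mul]
          refine Finset.sum_congr rfl fun i _ => ?_
          rw [gradHNormSq, Finset.mul_sum]
          exact Finset.sum_congr rfl fun l _ => by rw [hpd i, hpd l]

end Aux4

/-- For every Schwartz divergence-free vector field `u` on ℝ³,
`∫ ((u·∇)u)·Δₕu dx = -∫ Σ_{k,j=1}^3 Σ_{i=1}^2 ∂ⱼuₖ ∂ᵢuⱼ ∂ᵢuₖ dx`, and consequently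
`|∫ ((u·∇)u)·Δₕu dx| ≤ C ∫ |∇u| |∇ₕu|² dx` for a universal constant `C > 0`. -/
theorem horizontal_laplacian_trilinear_identity :
    ∃ C : ℝ, 0 < C ∧
      ∀ U : SchwartzMap E3 E3, (∀ x, div3 (⇑U) x = 0) →
        ((∫ x, ⟪advect (⇑U) (⇑U) x, lapH (⇑U) x⟫) =
            -∫ x, ∑ k : Fin 3, ∑ j : Fin 3, ∑ i ∈ ({0, 1} : Finset (Fin 3)),
              pdC j k (⇑U) x * pdC i j (⇑U) x * pdC i k (⇑U) x) ∧
          |∫ x, ⟪advect (⇑U) (⇑U) x, lapH (⇑U) x⟫| ≤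
            C * ∫ x, Real.sqrt (gradNormSq (⇑U) x) * gradHNormSq (⇑U) x := by
  refine ⟨18, by norm_num, fun U hU => ?_⟩
  have hid := key_identity U hU
  refine ⟨hid, ?_⟩
  rw [hid, abs_neg]
  have h1 : |∫ x, ∑ k : Fin 3, ∑ j : Fin 3, ∑ i ∈ ({0, 1} : Finset (Fin 3)),
        pdC j k (⇑U) x * pdC i j (⇑U) x * pdC i k (⇑U) x|
      ≤ ∫ x, |∑ k : Fin 3, ∑ j : Fin 3, ∑ i ∈ ({0, 1} : Finset (Fin 3)),
        pdC j k (⇑U) x * pdC i j (⇑U) x * pdC i k (⇑U) x| := by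
    have := MeasureTheory.norm_integral_le_integral_norm (μ := volume)
      (f := fun x => ∑ k : Fin 3, ∑ j : Fin 3, ∑ i ∈ ({0, 1} : Finset (Fin 3)),
        pdC j k (⇑U) x * pdC i j (⇑U) x * pdC i k (⇑U) x)
    simpa [Real.norm_eq_abs] using this
  have h2 : (∫ x, |∑ k : Fin 3, ∑ j : Fin 3, ∑ i ∈ ({0, 1} : Finset (Fin 3)),
        pdC j k (⇑U) x * pdC i j (⇑U) x * pdC i k (⇑U) x|)
      ≤ ∫ x, 18 * (Real.sqrt (gradNormSq (⇑U) x) * gradHNormSq (⇑U) x) := by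
    refine MeasureTheory.integral_mono ((S_integrable U).abs)
      ((rhs_integrable U).const_mul 18) ?_
    intro x
    exact S_bound U x
  have h3 : (∫ x, 18 * (Real.sqrt (gradNormSq (⇑U) x) * gradHNormSq (⇑U) x))
      = 18 * ∫ x, Real.sqrt (gradNormSq (⇑U) x) * gradHNormSq (⇑U) x :=
    MeasureTheory.integral_const_mul 18 _
  exact h1.trans (h2.trans h3.le)

end
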